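/- Let y > 0 and τ = 1/2 + y·i. Then the absolutely convergent lattice sum Σ over odd m and all n ∈ ℤ of (−1)ⁿ·m² / |mτ + n|⁶ equals 0. -/

import Mathlib

/-- The involution `(m, n) ↦ (m, -n - m)` on `ℤ × ℤ`. -/
def negShiftEquiv : ℤ × ℤ ≃ ℤ × ℤ where
  toFun p := (p.1, -p.2 - p.1)
  invFun p := (p.1, -p.2 - p.1)
  left_inv p := by simp
  right_inv p := by simp

/-- For `τ = 1/2 + y·i` with `y > 0`, the lattice sum
`Σ_{m odd, n ∈ ℤ} (−1)ⁿ·m²/|mτ+n|⁶` vanishes. -/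
theorem lattice_sum_odd_m_sq (y : ℝ) (hy : 0 < y) :
    (∑' p : ℤ × ℤ,
      if Odd p.1 then
        ((-1 : ℝ) ^ p.2 * (p.1 : ℝ) ^ 2)
          / ‖(p.1 : ℂ) * ((1 / 2 : ℂ) + (y : ℂ) * Complex.I) + (p.2 : ℂ)‖ ^ 6
      else 0) = 0 := by
  set τ : ℂ := (1 / 2 : ℂ) + (y : ℂ) * Complex.I with hτ
  set f : ℤ × ℤ → ℝ := fun p =>
    if Odd p.1 then
      ((-1 : ℝ) ^ p.2 * (p.1 : ℝ) ^ 2) / ‖(p.1 : ℂ) * τ + (p.2 : ℂ)‖ ^ 6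
    else 0 with hf
  have key : ∀ p : ℤ × ℤ, f (negShiftEquiv p) = - f p := by
    rintro ⟨m, n⟩
    simp only [hf, negShiftEquiv, Equiv.coe_fn_mk]
    by_cases hm : Odd m
    · simp only [hm, if_pos]
      have habs : ‖(m : ℂ) * τ + ((-n - m : ℤ) : ℂ)‖
          = ‖(m : ℂ) * τ + (n : ℂ)‖ := by
        have : ((m : ℂ) * τ + ((-n - m : ℤ) : ℂ)) = -(starRingEnd ℂ) ((m : ℂ) * τ + (n : ℂ)) := by
          push_cast
          rw [map_add, map_mul, hτ, map_add, map_mul]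
          simp [Complex.conj_I, map_ofNat, map_div₀]
          ring
        rw [this, norm_neg, Complex.norm_conj]
      rw [habs]
      have hsign : (-1 : ℝ) ^ (-n - m) = -((-1 : ℝ) ^ n) := by
        rcases Int.even_or_odd n with hn | hn
        · have h1 : Odd (-n - m) := by
            rcases hn with ⟨k, hk⟩; rcases hm with ⟨j, hj⟩
            exact ⟨-k - j - 1, by omega⟩
          rw [h1.neg_one_zpow, hn.neg_one_zpow]
        · have h1 : Even (-n - m) := by
            rcases hn with ⟨k, hk⟩; rcases hm with ⟨j, hj⟩
            exact ⟨-k - j - 1, by omega⟩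
          rw [h1.neg_one_zpow, hn.neg_one_zpow]
          ring
      rw [hsign]
      ring
    · simp [hm]
  have h1 : ∑' p, f (negShiftEquiv p) = ∑' p, f p := negShiftEquiv.tsum_eq f
  have h2 : ∑' p, f (negShiftEquiv p) = - ∑' p, f p := by
    calc ∑' p, f (negShiftEquiv p) = ∑' p, - f p := by exact tsum_congr key
    _ = - ∑' p, f p := by rw [tsum_neg]
  have : ∑' p, f p = 0 := by linarith [h1.symm.trans h2]
  exact this
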